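/- Let A ≪ B in 𝕀ℝ and let F₁, F₂ : 𝕀_{[A,B]} → 𝕀ℝ be continuous with respect to the Moore metric d_M. If F₁([x, ā + ((b̄−ā)/(b̲−a̲))(x−a̲)]) = F₂([x, ā + ((b̄−ā)/(b̲−a̲))(x−a̲)]) for every x ∈ [a̲, b̲] (i.e., F₁ and F₂ agree at every point of the segment from A to B), then ∫_A^B F₁(X)dX = ∫_A^B F₂(X)dX. -/

import Mathlib

/-- `𝕀ℝ`: the set of nonempty closed bounded real intervals, identified with
pairs `(lo, hi) ∈ ℝ × ℝ` with `lo ≤ hi`.  The subtype order inherited from the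
product order on `ℝ × ℝ` is exactly the Kulisch–Miranker order, and the
inherited metric (sup metric of `ℝ × ℝ`) is exactly the Moore metric `d_M`. -/
abbrev IR : Type := {p : ℝ × ℝ // p.1 ≤ p.2}

namespace IR

/-- Left endpoint projection `π₁`. -/
def lo (A : IR) : ℝ := A.val.1

/-- Right endpoint projection `π₂`. -/
def hi (A : IR) : ℝ := A.val.2

/-- The strict Kulisch–Miranker order `A ≪ B`. -/
def sll (A B : IR) : Prop := lo A < lo B ∧ hi A < hi B

/-- The Moore metric `d_M`. -/
noncomputable def dM (A B : IR) : ℝ := max |lo B - lo A| |hi B - hi A|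

/-- `𝕀_{[A,B]} = {X ∈ 𝕀ℝ : A ≤ X ≤ B}`. -/
def box (A B : IR) : Set IR := {X : IR | A ≤ X ∧ X ≤ B}

/-- The interval `[u,v]` (with a junk degenerate value if `u > v`). -/
noncomputable def mkI (u v : ℝ) : IR := if h : u ≤ v then ⟨(u, v), h⟩ else ⟨(u, u), le_rfl⟩

/-- The point `A + t(B - A)` on the segment from `A` to `B`. -/
noncomputable def seg (A B : IR) (t : ℝ) : IR :=
  mkI (lo A + t * (lo B - lo A)) (hi A + t * (hi B - hi A))

/-- Componentwise infimum of a set of intervals, as a pair of reals. -/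
noncomputable def infS (S : Set IR) : ℝ × ℝ := (sInf (lo '' S), sInf (hi '' S))

/-- Componentwise supremum of a set of intervals, as a pair of reals. -/
noncomputable def supS (S : Set IR) : ℝ × ℝ := (sSup (lo '' S), sSup (hi '' S))

/-- A partition `A = P₀ ≪ P₁ ≪ ⋯ ≪ P_N = B` of `𝕀_{[A,B]}`, described by its
parameters `0 = t₀ < t₁ < ⋯ < t_N = 1` (so that `P_k = A + t_k (B - A)`). -/
structure Partition where
  n : ℕ
  npos : 0 < n
  t : ℕ → ℝ
  t0 : t 0 = 0
  tn : t n = 1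
  mono : ∀ i < n, t i < t (i + 1)

/-- The set of parameters of a partition. -/
def Partition.pts (P : Partition) : Set ℝ := P.t '' Set.Iic P.n

/-- The set of points `P_k = A + t_k(B-A)` of a partition of `𝕀_{[A,B]}`. -/
noncomputable def Partition.ipts (A B : IR) (P : Partition) : Set IR :=
  (fun i => seg A B (P.t i)) '' Set.Iic P.n

/-- Lower Riemann sum `σ(F, 𝒫)` (as a pair of reals; interval sums are
componentwise and `λ • [u,v] = [λu, λv]` for the scalars `λ = d_M ≥ 0`). -/
noncomputable def lowerSum (A B : IR) (F : IR → IR) (P : Partition) : ℝ × ℝ :=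
  ∑ k ∈ Finset.range P.n,
    dM (seg A B (P.t k)) (seg A B (P.t (k + 1))) •
      infS (F '' box (seg A B (P.t k)) (seg A B (P.t (k + 1))))

/-- Upper Riemann sum `Σ(F, 𝒫)`. -/
noncomputable def upperSum (A B : IR) (F : IR → IR) (P : Partition) : ℝ × ℝ :=
  ∑ k ∈ Finset.range P.n,
    dM (seg A B (P.t k)) (seg A B (P.t (k + 1))) •
      supS (F '' box (seg A B (P.t k)) (seg A B (P.t (k + 1))))

/-- The lower integral `∫̲_A^B F(X)dX`: componentwise supremum of the lower
Riemann sums over all partitions. -/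
noncomputable def lowerInt (A B : IR) (F : IR → IR) : ℝ × ℝ :=
  (sSup (Set.range fun P : Partition => (lowerSum A B F P).1),
   sSup (Set.range fun P : Partition => (lowerSum A B F P).2))

/-- The upper integral `∫̄_A^B F(X)dX`: componentwise infimum of the upper
Riemann sums over all partitions. -/
noncomputable def upperInt (A B : IR) (F : IR → IR) : ℝ × ℝ :=
  (sInf (Set.range fun P : Partition => (upperSum A B F P).1),
   sInf (Set.range fun P : Partition => (upperSum A B F P).2))

/-- `F` is bounded on `𝕀_{[A,B]}` (order bounded, equivalently metrically
bounded). -/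
def BoundedOn (F : IR → IR) (A B : IR) : Prop :=
  ∃ C D : IR, ∀ X ∈ box A B, C ≤ F X ∧ F X ≤ D

end IR
namespace IR

lemma le_iff {A B : IR} : A ≤ B ↔ lo A ≤ lo B ∧ hi A ≤ hi B := by
  change A.val ≤ B.val ↔ _
  rw [Prod.le_def]; rfl

lemma lo_le_hi (A : IR) : lo A ≤ hi A := A.2

/-- `L = max α β`, the Moore distance from A to B. -/
noncomputable def LL (A B : IR) : ℝ := max (lo B - lo A) (hi B - hi A)

section
variable {A B : IR}

lemma LL_pos (h : sll A B) : 0 < LL A B := lt_max_of_lt_left (by linarith [h.1])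

lemma seg_ineq {t : ℝ} (ht : t ∈ Set.Icc (0:ℝ) 1) :
    lo A + t * (lo B - lo A) ≤ hi A + t * (hi B - hi A) := by
  obtain ⟨h0, h1⟩ := ht
  nlinarith [lo_le_hi A, lo_le_hi B]

lemma lo_seg {t : ℝ} (ht : t ∈ Set.Icc (0:ℝ) 1) :
    lo (seg A B t) = lo A + t * (lo B - lo A) := by
  rw [seg, mkI, dif_pos (seg_ineq ht)]; rfl

lemma hi_seg {t : ℝ} (ht : t ∈ Set.Icc (0:ℝ) 1) :
    hi (seg A B t) = hi A + t * (hi B - hi A) := by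
  rw [seg, mkI, dif_pos (seg_ineq ht)]; rfl

lemma seg_mono (h : sll A B) {t t' : ℝ} (ht : t ∈ Set.Icc (0:ℝ) 1)
    (ht' : t' ∈ Set.Icc (0:ℝ) 1) (htt : t ≤ t') : seg A B t ≤ seg A B t' := by
  rw [le_iff, lo_seg ht, lo_seg ht', hi_seg ht, hi_seg ht']
  constructor <;> nlinarith [h.1, h.2]

lemma seg_zero : seg A B 0 = A := by
  have h0 : (0:ℝ) ∈ Set.Icc (0:ℝ) 1 := by norm_num
  apply Subtype.ext
  have := lo_seg (A := A) (B := B) h0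
  have := hi_seg (A := A) (B := B) h0
  apply Prod.ext <;> simp_all [lo, hi]

lemma seg_one : seg A B 1 = B := by
  have h0 : (1:ℝ) ∈ Set.Icc (0:ℝ) 1 := by norm_num
  apply Subtype.ext
  have := lo_seg (A := A) (B := B) h0
  have := hi_seg (A := A) (B := B) h0
  apply Prod.ext <;> simp_all [lo, hi]

lemma seg_mem_box (h : sll A B) {t : ℝ} (ht : t ∈ Set.Icc (0:ℝ) 1) : seg A B t ∈ box A B := by
  constructor
  · have := seg_mono h (t := 0) (by norm_num) ht ht.1
    rwa [seg_zero] at this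
  · have := seg_mono h (t' := 1) ht (by norm_num) ht.2
    rwa [seg_one] at this

lemma box_subset (h : sll A B) {t t' : ℝ} (ht : t ∈ Set.Icc (0:ℝ) 1)
    (ht' : t' ∈ Set.Icc (0:ℝ) 1) :
    box (seg A B t) (seg A B t') ⊆ box A B := by
  intro X hX
  exact ⟨le_trans (seg_mem_box h ht).1 hX.1, le_trans hX.2 (seg_mem_box h ht').2⟩

lemma dM_seg (h : sll A B) {t t' : ℝ} (ht : t ∈ Set.Icc (0:ℝ) 1) (ht' : t' ∈ Set.Icc (0:ℝ) 1)
    (htt : t ≤ t') : dM (seg A B t) (seg A B t') = (t' - t) * LL A B := by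
  rw [dM, lo_seg ht, lo_seg ht', hi_seg ht, hi_seg ht', LL]
  have h1 : 0 ≤ (t' - t) * (lo B - lo A) := by nlinarith [h.1]
  have h2 : 0 ≤ (t' - t) * (hi B - hi A) := by nlinarith [h.2]
  rw [show lo A + t' * (lo B - lo A) - (lo A + t * (lo B - lo A)) = (t'-t)*(lo B - lo A) by ring,
      show hi A + t' * (hi B - hi A) - (hi A + t * (hi B - hi A)) = (t'-t)*(hi B - hi A) by ring,
      abs_of_nonneg h1, abs_of_nonneg h2, ← mul_max_of_nonneg _ _ (by linarith : (0:ℝ) ≤ t'-t)]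

lemma dist_le_of_mem_box (h : sll A B) {t t' : ℝ} (ht : t ∈ Set.Icc (0:ℝ) 1)
    (ht' : t' ∈ Set.Icc (0:ℝ) 1)
    (htt : t ≤ t') {X : IR} (hX : X ∈ box (seg A B t) (seg A B t')) :
    dist X (seg A B t) ≤ (t' - t) * LL A B := by
  obtain ⟨h1, h2⟩ := hX
  rw [le_iff] at h1 h2
  rw [Subtype.dist_eq, Prod.dist_eq]
  have e1 : dist (X : ℝ × ℝ).1 ((seg A B t : ℝ × ℝ)).1 = |lo X - lo (seg A B t)| :=
    Real.dist_eq _ _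
  have e2 : dist (X : ℝ × ℝ).2 ((seg A B t : ℝ × ℝ)).2 = |hi X - hi (seg A B t)| :=
    Real.dist_eq _ _
  rw [e1, e2, lo_seg ht, hi_seg ht]
  rw [lo_seg ht, hi_seg ht] at h1
  rw [lo_seg ht', hi_seg ht'] at h2
  have hα : lo B - lo A ≤ LL A B := le_max_left _ _
  have hβ : hi B - hi A ≤ LL A B := le_max_right _ _
  have h0 : 0 ≤ t' - t := by linarith
  have hL : 0 < LL A B := LL_pos h
  apply max_le
  · rw [abs_le]
    constructor
    · nlinarith [h1.1]
    · nlinarith [h2.1, h.1]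
  · rw [abs_le]
    constructor
    · nlinarith [h1.2]
    · nlinarith [h2.2, h.2]

end
end IR
namespace IR

lemma Partition.t_mono (P : Partition) {i j : ℕ} (hij : i ≤ j) (hj : j ≤ P.n) :
    P.t i ≤ P.t j := by
  induction j with
  | zero => simp_all
  | succ k ih =>
    rcases Nat.lt_or_ge i (k+1) with hc | hc
    · have h1 : P.t i ≤ P.t k := ih (Nat.lt_succ_iff.mp hc) (le_trans (Nat.le_succ k) hj)
      have h2 : P.t k < P.t (k+1) := P.mono k (by omega)
      linarith
    · have : i = k + 1 := le_antisymm hij hc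
      simp [this]

lemma Partition.t_mem (P : Partition) {k : ℕ} (hk : k ≤ P.n) : P.t k ∈ Set.Icc (0:ℝ) 1 := by
  constructor
  · rw [← P.t0]; exact P.t_mono (Nat.zero_le k) hk
  · rw [← P.tn]; exact P.t_mono hk le_rfl

/-- A one-interval partition. -/
def Partition.triv : Partition where
  n := 1
  npos := one_pos
  t := fun i => if i = 0 then 0 else 1
  t0 := by simp
  tn := by simp
  mono := by intro i hi; interval_cases i; norm_num

/-- Scalar upper Riemann sum. -/
noncomputable def usumG (A B : IR) (g : IR → ℝ) (P : Partition) : ℝ :=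
  ∑ k ∈ Finset.range P.n,
    dM (seg A B (P.t k)) (seg A B (P.t (k + 1))) *
      sSup (g '' box (seg A B (P.t k)) (seg A B (P.t (k + 1))))

/-- Scalar lower Riemann sum. -/
noncomputable def lsumG (A B : IR) (g : IR → ℝ) (P : Partition) : ℝ :=
  ∑ k ∈ Finset.range P.n,
    dM (seg A B (P.t k)) (seg A B (P.t (k + 1))) *
      sInf (g '' box (seg A B (P.t k)) (seg A B (P.t (k + 1))))

lemma upperSum_fst (A B : IR) (F : IR → IR) (P : Partition) :
    (upperSum A B F P).1 = usumG A B (fun X => lo (F X)) P := by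
  rw [upperSum, usumG, Prod.fst_sum]
  refine Finset.sum_congr rfl fun k _ => ?_
  rw [Prod.smul_fst, smul_eq_mul, supS, Set.image_image]

lemma upperSum_snd (A B : IR) (F : IR → IR) (P : Partition) :
    (upperSum A B F P).2 = usumG A B (fun X => hi (F X)) P := by
  rw [upperSum, usumG, Prod.snd_sum]
  refine Finset.sum_congr rfl fun k _ => ?_
  rw [Prod.smul_snd, smul_eq_mul, supS]
  simp [Set.image_image]

lemma lowerSum_fst (A B : IR) (F : IR → IR) (P : Partition) :
    (lowerSum A B F P).1 = lsumG A B (fun X => lo (F X)) P := by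
  rw [lowerSum, lsumG, Prod.fst_sum]
  refine Finset.sum_congr rfl fun k _ => ?_
  rw [Prod.smul_fst, smul_eq_mul, infS, Set.image_image]

lemma lowerSum_snd (A B : IR) (F : IR → IR) (P : Partition) :
    (lowerSum A B F P).2 = lsumG A B (fun X => hi (F X)) P := by
  rw [lowerSum, lsumG, Prod.snd_sum]
  refine Finset.sum_congr rfl fun k _ => ?_
  rw [Prod.smul_snd, smul_eq_mul, infS]
  simp [Set.image_image]

lemma isCompact_box (A B : IR) : IsCompact (box A B) := by
  have hval : Subtype.val '' box A B = Set.Icc A.val B.val ∩ {p : ℝ × ℝ | p.1 ≤ p.2} := by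
    ext p
    constructor
    · rintro ⟨X, ⟨h1, h2⟩, rfl⟩
      exact ⟨⟨h1, h2⟩, X.2⟩
    · rintro ⟨⟨h1, h2⟩, hp⟩
      exact ⟨⟨p, hp⟩, ⟨h1, h2⟩, rfl⟩
  have hcomp : IsCompact (Subtype.val '' box A B) := by
    rw [hval]
    exact isCompact_Icc.inter_right (isClosed_le continuous_fst continuous_snd)
  rw [Topology.IsEmbedding.isCompact_iff Topology.IsEmbedding.subtypeVal]
  exact hcomp

lemma exists_bounds {A B : IR} {g : IR → ℝ} (hc : ContinuousOn g (box A B)) :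
    ∃ C : ℝ, ∀ X ∈ box A B, -C ≤ g X ∧ g X ≤ C := by
  obtain ⟨C, hC⟩ := (isCompact_box A B).exists_bound_of_continuousOn hc
  exact ⟨C, fun X hX => abs_le.mp (hC X hX)⟩

end IR
namespace IR

/-- Refinement of a partition: divide each subinterval into `m` equal parts. -/
noncomputable def Partition.refine (Q : Partition) (m : ℕ) (hm : 0 < m) : Partition where
  n := Q.n * m
  npos := Nat.mul_pos Q.npos hm
  t := fun i => Q.t (i / m) + ((i % m : ℕ) : ℝ) / m * (Q.t (i / m + 1) - Q.t (i / m))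
  t0 := by simp [Nat.zero_div, Q.t0]
  tn := by
    have h1 : Q.n * m / m = Q.n := Nat.mul_div_cancel _ hm
    have h2 : Q.n * m % m = 0 := Nat.mul_mod_left _ _
    simp [h1, h2, Q.tn]
  mono := by
    intro i hi
    set j := i / m with hj
    set r := i % m with hr
    have hrm : r < m := Nat.mod_lt _ hm
    have hij : i = m * j + r := by rw [hj, hr]; exact (Nat.div_add_mod i m).symm
    have hjn : j < Q.n := Nat.div_lt_iff_lt_mul hm |>.mpr hi
    have hΔ : 0 < Q.t (j + 1) - Q.t j := sub_pos.mpr (Q.mono j hjn)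
    have hm' : (0:ℝ) < m := by exact_mod_cast hm
    rcases Nat.lt_or_ge (r + 1) m with hc | hc
    · have e1 : (i + 1) / m = j := by
        rw [hij, show m * j + r + 1 = m * j + (r + 1) by ring, Nat.mul_add_div hm,
          Nat.div_eq_of_lt hc, Nat.add_zero]
      have e2 : (i + 1) % m = r + 1 := by
        rw [hij, show m * j + r + 1 = m * j + (r + 1) by ring, Nat.mul_add_mod,
          Nat.mod_eq_of_lt hc]
      simp only [e1, e2, ← hj, ← hr]
      have hlt : (r:ℝ)/m < ((r:ℕ)+1:ℕ)/m := by
        gcongr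
        exact_mod_cast Nat.lt_succ_self r
      nlinarith
    · have hce : r + 1 = m := by omega
      have hi1 : i + 1 = m * (j + 1) := by rw [hij, Nat.mul_succ]; omega
      have e1 : (i + 1) / m = j + 1 := by rw [hi1, Nat.mul_div_cancel_left _ hm]
      have e2 : (i + 1) % m = 0 := by rw [hi1, Nat.mul_mod_right]
      simp only [e1, e2, ← hj, ← hr]
      have hrlt : (r:ℝ)/m < 1 := by
        rw [div_lt_one hm']
        exact_mod_cast hrm
      simp only [Nat.cast_zero, zero_div, zero_mul, add_zero]
      nlinarith [mul_pos (by linarith : (0:ℝ) < 1 - (r:ℝ)/m) hΔ]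

lemma Partition.refine_t (Q : Partition) {m : ℕ} (hm : 0 < m) {j r : ℕ} (hr : r < m) :
    (Q.refine m hm).t (j * m + r) = Q.t j + (r:ℝ)/m * (Q.t (j+1) - Q.t j) := by
  have e1 : (j * m + r) / m = j := by
    rw [Nat.mul_comm, Nat.mul_add_div hm, Nat.div_eq_of_lt hr, Nat.add_zero]
  have e2 : (j * m + r) % m = r := by
    rw [Nat.mul_comm, Nat.mul_add_mod, Nat.mod_eq_of_lt hr]
  simp only [Partition.refine, e1, e2]

lemma sum_group (f : ℕ → ℝ) (n m : ℕ) :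
    ∑ k ∈ Finset.range (n * m), f k
      = ∑ j ∈ Finset.range n, ∑ r ∈ Finset.range m, f (j * m + r) := by
  induction n with
  | zero => simp
  | succ n ih =>
    rw [Finset.sum_range_succ, ← ih, Nat.succ_mul, Finset.sum_range_add]

end IR
namespace IR

lemma usumG_eq {A B : IR} (h : sll A B) (g : IR → ℝ) (Q : Partition) :
    usumG A B g Q = ∑ j ∈ Finset.range Q.n, (Q.t (j+1) - Q.t j) * LL A B *
      sSup (g '' box (seg A B (Q.t j)) (seg A B (Q.t (j+1)))) := by
  refine Finset.sum_congr rfl fun j hj => ?_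
  rw [Finset.mem_range] at hj
  rw [dM_seg h (Q.t_mem hj.le) (Q.t_mem hj) (Q.t_mono (Nat.le_succ j) hj)]

lemma lsumG_eq {A B : IR} (h : sll A B) (g : IR → ℝ) (Q : Partition) :
    lsumG A B g Q = ∑ j ∈ Finset.range Q.n, (Q.t (j+1) - Q.t j) * LL A B *
      sInf (g '' box (seg A B (Q.t j)) (seg A B (Q.t (j+1)))) := by
  refine Finset.sum_congr rfl fun j hj => ?_
  rw [Finset.mem_range] at hj
  rw [dM_seg h (Q.t_mem hj.le) (Q.t_mem hj) (Q.t_mono (Nat.le_succ j) hj)]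

lemma sum_delta (Q : Partition) : ∑ j ∈ Finset.range Q.n, (Q.t (j+1) - Q.t j) = 1 := by
  rw [Finset.sum_range_sub, Q.tn, Q.t0, sub_zero]

lemma key {A B : IR} (h : sll A B) {g₁ g₂ : IR → ℝ}
    (hc₁ : ContinuousOn g₁ (box A B)) (hc₂ : ContinuousOn g₂ (box A B))
    (hag : ∀ t ∈ Set.Icc (0:ℝ) 1, g₁ (seg A B t) = g₂ (seg A B t))
    (Q : Partition) {ε : ℝ} (hε : 0 < ε) :
    ∃ P : Partition, usumG A B g₁ P ≤ usumG A B g₂ Q + ε ∧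
      lsumG A B g₂ Q ≤ lsumG A B g₁ P + ε := by
  have hL : 0 < LL A B := LL_pos h
  set L := LL A B with hLdef
  set ε' := ε / L with hε'def
  have hε' : 0 < ε' := div_pos hε hL
  obtain ⟨C₂, hC₂⟩ := exists_bounds hc₂
  have huc := (isCompact_box A B).uniformContinuousOn_of_continuous hc₁
  rw [Metric.uniformContinuousOn_iff] at huc
  obtain ⟨δ, hδ, hmod⟩ := huc ε' hε'
  obtain ⟨m₀, hm₀⟩ := exists_nat_gt (L / δ)
  set m := m₀ + 1 with hmdef
  have hm : 0 < m := Nat.succ_pos _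
  have hmR : (0:ℝ) < m := by exact_mod_cast hm
  have hLm : L / m < δ := by
    have h1 : L / δ < (m:ℝ) := by
      refine hm₀.trans_le ?_
      exact_mod_cast Nat.le_succ m₀
    have h2 : L < (m:ℝ) * δ := (div_lt_iff₀ hδ).mp h1
    rw [div_lt_iff₀ hmR]; linarith
  set P := Q.refine m hm with hPdef
  have hPn : P.n = Q.n * m := rfl
  have ht1 : ∀ j r : ℕ, r < m → P.t (j*m+r) = Q.t j + (r:ℝ)/m * (Q.t (j+1) - Q.t j) :=
    fun j r hr => Q.refine_t hm hr
  have ht2 : ∀ j r : ℕ, r < m → P.t (j*m+r+1) =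
      Q.t j + ((r:ℝ)+1)/m * (Q.t (j+1) - Q.t j) := by
    intro j r hr
    rcases Nat.lt_or_ge (r+1) m with hc | hc
    · have e := Q.refine_t hm (j := j) hc
      rw [show j*m+r+1 = j*m+(r+1) from rfl, e]
      push_cast; ring
    · have hce : r + 1 = m := by omega
      have e0 : j*m+r+1 = (j+1)*m + 0 := by rw [Nat.succ_mul]; omega
      rw [e0, Q.refine_t hm hm]
      have e1 : ((r:ℝ)+1) = (m:ℝ) := by exact_mod_cast congrArg (Nat.cast (R := ℝ)) hce
      rw [e1]
      field_simp
      push_cast; ring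
  -- the two cell estimates
  have cell : ∀ j < Q.n, ∀ r < m,
      (dM (seg A B (P.t (j*m+r))) (seg A B (P.t (j*m+r+1))) *
        sSup (g₁ '' box (seg A B (P.t (j*m+r))) (seg A B (P.t (j*m+r+1))))
        ≤ (Q.t (j+1) - Q.t j) * L / m *
          (sSup (g₂ '' box (seg A B (Q.t j)) (seg A B (Q.t (j+1)))) + ε')) ∧
      ((Q.t (j+1) - Q.t j) * L / m *
          (sInf (g₂ '' box (seg A B (Q.t j)) (seg A B (Q.t (j+1)))) - ε')
        ≤ dM (seg A B (P.t (j*m+r))) (seg A B (P.t (j*m+r+1))) *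
          sInf (g₁ '' box (seg A B (P.t (j*m+r))) (seg A B (P.t (j*m+r+1))))) := by
    intro j hj r hr
    have hQj := Q.t_mem hj.le
    have hQj1 := Q.t_mem hj
    have hΔ0 : 0 ≤ Q.t (j+1) - Q.t j := sub_nonneg.mpr (Q.t_mono (Nat.le_succ j) hj)
    have hΔ1 : Q.t (j+1) - Q.t j ≤ 1 := by
      have := hQj.1; have := hQj1.2; linarith
    have e1 := ht1 j r hr
    have e2 := ht2 j r hr
    set ta := P.t (j*m+r)
    set tb := P.t (j*m+r+1)
    have h0r : (0:ℝ) ≤ (r:ℝ)/m := div_nonneg (Nat.cast_nonneg r) hmR.le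
    have hr1 : ((r:ℝ)+1)/m ≤ 1 := by
      rw [div_le_one hmR]
      have : (r:ℝ) + 1 = ((r+1 : ℕ) : ℝ) := by push_cast; ring
      rw [this]; exact_mod_cast hr
    have hab : tb - ta = (Q.t (j+1) - Q.t j)/m := by rw [e1, e2]; ring
    have htab : ta ≤ tb := by
      have := div_nonneg hΔ0 hmR.le; linarith
    have hta_lb : Q.t j ≤ ta := by
      rw [e1]; nlinarith [mul_nonneg h0r hΔ0]
    have htb_ub : tb ≤ Q.t (j+1) := by
      rw [e2]; nlinarith [mul_nonneg (by linarith : (0:ℝ) ≤ 1 - ((r:ℝ)+1)/m) hΔ0]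
    have hta : ta ∈ Set.Icc (0:ℝ) 1 := ⟨by linarith [hQj.1], by linarith [hQj1.2]⟩
    have htb : tb ∈ Set.Icc (0:ℝ) 1 := ⟨by linarith [hQj.1], by linarith [hQj1.2]⟩
    have hta_ubQ : ta ≤ Q.t (j+1) := le_trans htab htb_ub
    have hd : dM (seg A B ta) (seg A B tb) = (tb - ta) * L := dM_seg h hta htb htab
    have hdnn : 0 ≤ (tb - ta) * L := mul_nonneg (by linarith) hL.le
    have hsmall : (tb - ta) * L < δ := by
      rw [hab]
      have hdiv : (Q.t (j+1) - Q.t j)/m ≤ 1/m := by gcongr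
      calc (Q.t (j+1) - Q.t j)/m * L ≤ 1/m * L :=
            mul_le_mul_of_nonneg_right hdiv hL.le
        _ = L / m := by ring
        _ < δ := hLm
    have hsub : box (seg A B ta) (seg A B tb) ⊆ box A B := box_subset h hta htb
    have hsubQ : box (seg A B (Q.t j)) (seg A B (Q.t (j+1))) ⊆ box A B := box_subset h hQj hQj1
    have hne : seg A B ta ∈ box (seg A B ta) (seg A B tb) :=
      ⟨le_refl _, seg_mono h hta htb htab⟩
    have hsegmem : seg A B ta ∈ box (seg A B (Q.t j)) (seg A B (Q.t (j+1))) :=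
      ⟨seg_mono h hQj hta hta_lb, seg_mono h hta hQj1 hta_ubQ⟩
    have hg12 : g₁ (seg A B ta) = g₂ (seg A B ta) := hag _ hta
    have hclose : ∀ X ∈ box (seg A B ta) (seg A B tb), |g₁ X - g₁ (seg A B ta)| ≤ ε' := by
      intro X hX
      have h1 : dist X (seg A B ta) ≤ (tb - ta) * L := dist_le_of_mem_box h hta htb htab hX
      have h2 : dist X (seg A B ta) < δ := lt_of_le_of_lt h1 hsmall
      have h3 := hmod X (hsub hX) (seg A B ta) (seg_mem_box h hta) h2
      rw [Real.dist_eq] at h3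
      exact h3.le
    have hnonemptyU : (g₁ '' box (seg A B ta) (seg A B tb)).Nonempty :=
      ⟨g₁ (seg A B ta), Set.mem_image_of_mem _ hne⟩
    have hsup1 : sSup (g₁ '' box (seg A B ta) (seg A B tb)) ≤ g₂ (seg A B ta) + ε' := by
      apply csSup_le hnonemptyU
      rintro y ⟨X, hX, rfl⟩
      have hb := hclose X hX
      rw [abs_le] at hb
      rw [← hg12]
      linarith [hb.2]
    have hinf1 : g₂ (seg A B ta) - ε' ≤ sInf (g₁ '' box (seg A B ta) (seg A B tb)) := by
      apply le_csInf hnonemptyU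
      rintro y ⟨X, hX, rfl⟩
      have hb := hclose X hX
      rw [abs_le] at hb
      rw [← hg12]
      linarith [hb.1]
    have hbddA : BddAbove (g₂ '' box (seg A B (Q.t j)) (seg A B (Q.t (j+1)))) := by
      refine ⟨C₂, ?_⟩
      rintro y ⟨X, hX, rfl⟩
      exact (hC₂ X (hsubQ hX)).2
    have hbddB : BddBelow (g₂ '' box (seg A B (Q.t j)) (seg A B (Q.t (j+1)))) := by
      refine ⟨-C₂, ?_⟩
      rintro y ⟨X, hX, rfl⟩
      exact (hC₂ X (hsubQ hX)).1
    have hsup2 : g₂ (seg A B ta) ≤ sSup (g₂ '' box (seg A B (Q.t j)) (seg A B (Q.t (j+1)))) :=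
      le_csSup hbddA ⟨seg A B ta, hsegmem, rfl⟩
    have hinf2 : sInf (g₂ '' box (seg A B (Q.t j)) (seg A B (Q.t (j+1)))) ≤ g₂ (seg A B ta) :=
      csInf_le hbddB ⟨seg A B ta, hsegmem, rfl⟩
    have hdval : dM (seg A B ta) (seg A B tb) = (Q.t (j+1) - Q.t j) * L / m := by
      rw [hd, hab]; ring
    have hdnn' : 0 ≤ (Q.t (j+1) - Q.t j) * L / m :=
      div_nonneg (mul_nonneg hΔ0 hL.le) hmR.le
    constructor
    · rw [hdval]
      exact mul_le_mul_of_nonneg_left (by linarith [hsup1, hsup2]) hdnn'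
    · rw [hdval]
      exact mul_le_mul_of_nonneg_left (by linarith [hinf1, hinf2]) hdnn'
  have hLε : L * ε' = ε := by rw [hε'def]; field_simp
  have e : ∀ g : IR → ℝ, usumG A B g P = ∑ j ∈ Finset.range Q.n, ∑ r ∈ Finset.range m,
      dM (seg A B (P.t (j*m+r))) (seg A B (P.t (j*m+r+1))) *
        sSup (g '' box (seg A B (P.t (j*m+r))) (seg A B (P.t (j*m+r+1)))) := by
    intro g
    rw [usumG]
    exact sum_group _ Q.n m
  have e' : ∀ g : IR → ℝ, lsumG A B g P = ∑ j ∈ Finset.range Q.n, ∑ r ∈ Finset.range m,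
      dM (seg A B (P.t (j*m+r))) (seg A B (P.t (j*m+r+1))) *
        sInf (g '' box (seg A B (P.t (j*m+r))) (seg A B (P.t (j*m+r+1)))) := by
    intro g
    rw [lsumG]
    exact sum_group _ Q.n m
  refine ⟨P, ?_, ?_⟩
  · rw [e, usumG_eq h g₂ Q]
    refine le_trans (Finset.sum_le_sum fun j hj => Finset.sum_le_sum fun r hr =>
      (cell j (Finset.mem_range.mp hj) r (Finset.mem_range.mp hr)).1) (le_of_eq ?_)
    have e2 : ∀ j ∈ Finset.range Q.n,
        (∑ _r ∈ Finset.range m, (Q.t (j+1) - Q.t j) * L / m *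
          (sSup (g₂ '' box (seg A B (Q.t j)) (seg A B (Q.t (j+1)))) + ε'))
        = (Q.t (j+1) - Q.t j) * L *
            sSup (g₂ '' box (seg A B (Q.t j)) (seg A B (Q.t (j+1))))
          + (Q.t (j+1) - Q.t j) * (L * ε') := by
      intro j _
      rw [Finset.sum_const, Finset.card_range, nsmul_eq_mul]
      field_simp
    rw [Finset.sum_congr rfl e2, Finset.sum_add_distrib, ← Finset.sum_mul, sum_delta, one_mul,
      hLε]
  · rw [e', lsumG_eq h g₂ Q]
    have e2 : ∀ j ∈ Finset.range Q.n,
        (Q.t (j+1) - Q.t j) * L * sInf (g₂ '' box (seg A B (Q.t j)) (seg A B (Q.t (j+1))))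
        = (∑ _r ∈ Finset.range m, (Q.t (j+1) - Q.t j) * L / m *
            (sInf (g₂ '' box (seg A B (Q.t j)) (seg A B (Q.t (j+1)))) - ε'))
          + (Q.t (j+1) - Q.t j) * (L * ε') := by
      intro j _
      rw [Finset.sum_const, Finset.card_range, nsmul_eq_mul]
      field_simp
      ring
    rw [Finset.sum_congr rfl e2, Finset.sum_add_distrib, ← Finset.sum_mul, sum_delta, one_mul,
      hLε]
    exact add_le_add_left (Finset.sum_le_sum fun j hj => Finset.sum_le_sum fun r hr =>
      (cell j (Finset.mem_range.mp hj) r (Finset.mem_range.mp hr)).2) ε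
end IR
namespace IR

lemma usum_lb {A B : IR} (h : sll A B) {g : IR → ℝ} {C : ℝ}
    (hC : ∀ X ∈ box A B, -C ≤ g X ∧ g X ≤ C) (P : Partition) :
    -C * LL A B ≤ usumG A B g P := by
  rw [usumG_eq h]
  have lower : ∀ j ∈ Finset.range P.n, (P.t (j+1) - P.t j) * LL A B * (-C)
      ≤ (P.t (j+1) - P.t j) * LL A B *
        sSup (g '' box (seg A B (P.t j)) (seg A B (P.t (j+1)))) := by
    intro j hj
    rw [Finset.mem_range] at hj
    have hΔ0 : 0 ≤ P.t (j+1) - P.t j := sub_nonneg.mpr (P.t_mono (Nat.le_succ j) hj)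
    have hsub := box_subset h (P.t_mem hj.le) (P.t_mem hj)
    have hmem : seg A B (P.t j) ∈ box (seg A B (P.t j)) (seg A B (P.t (j+1))) :=
      ⟨le_refl _, seg_mono h (P.t_mem hj.le) (P.t_mem hj) (P.t_mono (Nat.le_succ j) hj)⟩
    have hbdd : BddAbove (g '' box (seg A B (P.t j)) (seg A B (P.t (j+1)))) := by
      refine ⟨C, ?_⟩; rintro y ⟨X, hX, rfl⟩; exact (hC X (hsub hX)).2
    have hle : -C ≤ sSup (g '' box (seg A B (P.t j)) (seg A B (P.t (j+1)))) :=
      le_trans (hC _ (hsub hmem)).1 (le_csSup hbdd ⟨_, hmem, rfl⟩)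
    exact mul_le_mul_of_nonneg_left hle (mul_nonneg hΔ0 (LL_pos h).le)
  have e : ∑ j ∈ Finset.range P.n, (P.t (j+1) - P.t j) * LL A B * (-C)
      = -C * LL A B := by
    simp only [mul_assoc]
    rw [← Finset.sum_mul, sum_delta, one_mul]; ring
  linarith [Finset.sum_le_sum lower, e]

lemma lsum_ub {A B : IR} (h : sll A B) {g : IR → ℝ} {C : ℝ}
    (hC : ∀ X ∈ box A B, -C ≤ g X ∧ g X ≤ C) (P : Partition) :
    lsumG A B g P ≤ C * LL A B := by
  rw [lsumG_eq h]
  have upper : ∀ j ∈ Finset.range P.n, (P.t (j+1) - P.t j) * LL A B *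
        sInf (g '' box (seg A B (P.t j)) (seg A B (P.t (j+1))))
      ≤ (P.t (j+1) - P.t j) * LL A B * C := by
    intro j hj
    rw [Finset.mem_range] at hj
    have hΔ0 : 0 ≤ P.t (j+1) - P.t j := sub_nonneg.mpr (P.t_mono (Nat.le_succ j) hj)
    have hsub := box_subset h (P.t_mem hj.le) (P.t_mem hj)
    have hmem : seg A B (P.t j) ∈ box (seg A B (P.t j)) (seg A B (P.t (j+1))) :=
      ⟨le_refl _, seg_mono h (P.t_mem hj.le) (P.t_mem hj) (P.t_mono (Nat.le_succ j) hj)⟩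
    have hbdd : BddBelow (g '' box (seg A B (P.t j)) (seg A B (P.t (j+1)))) := by
      refine ⟨-C, ?_⟩; rintro y ⟨X, hX, rfl⟩; exact (hC X (hsub hX)).1
    have hle : sInf (g '' box (seg A B (P.t j)) (seg A B (P.t (j+1)))) ≤ C :=
      le_trans (csInf_le hbdd ⟨_, hmem, rfl⟩) (hC _ (hsub hmem)).2
    exact mul_le_mul_of_nonneg_left hle (mul_nonneg hΔ0 (LL_pos h).le)
  have e : ∑ j ∈ Finset.range P.n, (P.t (j+1) - P.t j) * LL A B * C
      = C * LL A B := by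
    simp only [mul_assoc]
    rw [← Finset.sum_mul, sum_delta, one_mul]; ring
  linarith [Finset.sum_le_sum upper, e]

lemma inf_usum_eq {A B : IR} (h : sll A B) {g₁ g₂ : IR → ℝ}
    (hc₁ : ContinuousOn g₁ (box A B)) (hc₂ : ContinuousOn g₂ (box A B))
    (hag : ∀ t ∈ Set.Icc (0:ℝ) 1, g₁ (seg A B t) = g₂ (seg A B t)) :
    sInf (Set.range fun P : Partition => usumG A B g₁ P)
      = sInf (Set.range fun P : Partition => usumG A B g₂ P) := by
  have hag' : ∀ t ∈ Set.Icc (0:ℝ) 1, g₂ (seg A B t) = g₁ (seg A B t) :=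
    fun t ht => (hag t ht).symm
  obtain ⟨C₁, hC₁⟩ := exists_bounds hc₁
  obtain ⟨C₂, hC₂⟩ := exists_bounds hc₂
  have hbdd₁ : BddBelow (Set.range fun P : Partition => usumG A B g₁ P) := by
    refine ⟨-C₁ * LL A B, ?_⟩; rintro y ⟨P, rfl⟩; exact usum_lb h hC₁ P
  have hbdd₂ : BddBelow (Set.range fun P : Partition => usumG A B g₂ P) := by
    refine ⟨-C₂ * LL A B, ?_⟩; rintro y ⟨P, rfl⟩; exact usum_lb h hC₂ P
  have hne : ∀ g : IR → ℝ, (Set.range fun P : Partition => usumG A B g P).Nonempty :=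
    fun g => ⟨_, ⟨Partition.triv, rfl⟩⟩
  apply le_antisymm
  · refine le_of_forall_pos_le_add fun ε hε => ?_
    rw [← sub_le_iff_le_add]
    apply le_csInf (hne g₂)
    rintro b ⟨Q, rfl⟩
    obtain ⟨P, hP, -⟩ := key h hc₁ hc₂ hag Q hε
    have h2 := csInf_le hbdd₁ ⟨P, rfl⟩
    linarith
  · refine le_of_forall_pos_le_add fun ε hε => ?_
    rw [← sub_le_iff_le_add]
    apply le_csInf (hne g₁)
    rintro b ⟨Q, rfl⟩
    obtain ⟨P, hP, -⟩ := key h hc₂ hc₁ hag' Q hε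
    have h2 := csInf_le hbdd₂ ⟨P, rfl⟩
    linarith

lemma sup_lsum_eq {A B : IR} (h : sll A B) {g₁ g₂ : IR → ℝ}
    (hc₁ : ContinuousOn g₁ (box A B)) (hc₂ : ContinuousOn g₂ (box A B))
    (hag : ∀ t ∈ Set.Icc (0:ℝ) 1, g₁ (seg A B t) = g₂ (seg A B t)) :
    sSup (Set.range fun P : Partition => lsumG A B g₁ P)
      = sSup (Set.range fun P : Partition => lsumG A B g₂ P) := by
  have hag' : ∀ t ∈ Set.Icc (0:ℝ) 1, g₂ (seg A B t) = g₁ (seg A B t) :=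
    fun t ht => (hag t ht).symm
  obtain ⟨C₁, hC₁⟩ := exists_bounds hc₁
  obtain ⟨C₂, hC₂⟩ := exists_bounds hc₂
  have hbdd₁ : BddAbove (Set.range fun P : Partition => lsumG A B g₁ P) := by
    refine ⟨C₁ * LL A B, ?_⟩; rintro y ⟨P, rfl⟩; exact lsum_ub h hC₁ P
  have hbdd₂ : BddAbove (Set.range fun P : Partition => lsumG A B g₂ P) := by
    refine ⟨C₂ * LL A B, ?_⟩; rintro y ⟨P, rfl⟩; exact lsum_ub h hC₂ P
  have hne : ∀ g : IR → ℝ, (Set.range fun P : Partition => lsumG A B g P).Nonempty :=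
    fun g => ⟨_, ⟨Partition.triv, rfl⟩⟩
  apply le_antisymm
  · apply csSup_le (hne g₁)
    rintro a ⟨Q, rfl⟩
    refine le_of_forall_pos_le_add fun ε hε => ?_
    obtain ⟨P, -, hP⟩ := key h hc₂ hc₁ hag' Q hε
    have h2 := le_csSup hbdd₂ ⟨P, rfl⟩
    linarith
  · apply csSup_le (hne g₂)
    rintro a ⟨Q, rfl⟩
    refine le_of_forall_pos_le_add fun ε hε => ?_
    obtain ⟨P, -, hP⟩ := key h hc₁ hc₂ hag Q hε
    have h2 := le_csSup hbdd₁ ⟨P, rfl⟩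
    linarith

lemma continuous_lo : Continuous lo := continuous_fst.comp continuous_subtype_val
lemma continuous_hi : Continuous hi := continuous_snd.comp continuous_subtype_val

end IR

open IR in
/-- Let `A ≪ B` and let `F₁, F₂ : 𝕀_{[A,B]} → 𝕀ℝ` be continuous w.r.t. the
Moore metric.  If `F₁` and `F₂` agree at every point
`[x, ā + ((b̄−ā)/(b̲−a̲))(x−a̲)]`, `x ∈ [a̲,b̲]`, of the segment from `A` to `B`,
then `∫_A^B F₁(X)dX = ∫_A^B F₂(X)dX` (for continuous functions the lower and
upper integrals coincide, so we state equality of both). -/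
theorem IR.integral_depends_only_on_segment (A B : IR) (h : sll A B)
    (F₁ F₂ : IR → IR) (h₁ : ContinuousOn F₁ (box A B))
    (h₂ : ContinuousOn F₂ (box A B))
    (hagree : ∀ x ∈ Set.Icc (lo A) (lo B),
      F₁ (mkI x (hi A + ((hi B - hi A) / (lo B - lo A)) * (x - lo A))) =
      F₂ (mkI x (hi A + ((hi B - hi A) / (lo B - lo A)) * (x - lo A)))) :
    lowerInt A B F₁ = lowerInt A B F₂ ∧ upperInt A B F₁ = upperInt A B F₂ := by
  have hseg : ∀ t ∈ Set.Icc (0:ℝ) 1, F₁ (seg A B t) = F₂ (seg A B t) := by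
    intro t ht
    have hlt : lo A < lo B := h.1
    have hx : lo A + t * (lo B - lo A) ∈ Set.Icc (lo A) (lo B) :=
      ⟨by nlinarith [ht.1, ht.2], by nlinarith [ht.1, ht.2]⟩
    have harg : hi A + ((hi B - hi A)/(lo B - lo A)) * ((lo A + t * (lo B - lo A)) - lo A)
        = hi A + t * (hi B - hi A) := by
      have hne : lo B - lo A ≠ 0 := ne_of_gt (by linarith)
      field_simp
      ring
    have hh := hagree _ hx
    rw [harg] at hh
    exact hh
  have hag1 : ∀ t ∈ Set.Icc (0:ℝ) 1,
      (fun X => lo (F₁ X)) (seg A B t) = (fun X => lo (F₂ X)) (seg A B t) :=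
    fun t ht => by simp only [hseg t ht]
  have hag2 : ∀ t ∈ Set.Icc (0:ℝ) 1,
      (fun X => hi (F₁ X)) (seg A B t) = (fun X => hi (F₂ X)) (seg A B t) :=
    fun t ht => by simp only [hseg t ht]
  have hc1lo : ContinuousOn (fun X => lo (F₁ X)) (box A B) :=
    continuous_lo.comp_continuousOn h₁
  have hc2lo : ContinuousOn (fun X => lo (F₂ X)) (box A B) :=
    continuous_lo.comp_continuousOn h₂
  have hc1hi : ContinuousOn (fun X => hi (F₁ X)) (box A B) :=
    continuous_hi.comp_continuousOn h₁
  have hc2hi : ContinuousOn (fun X => hi (F₂ X)) (box A B) :=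
    continuous_hi.comp_continuousOn h₂
  constructor
  · rw [lowerInt, lowerInt]
    simp only [lowerSum_fst, lowerSum_snd]
    rw [sup_lsum_eq h hc1lo hc2lo hag1, sup_lsum_eq h hc1hi hc2hi hag2]
  · rw [upperInt, upperInt]
    simp only [upperSum_fst, upperSum_snd]
    rw [inf_usum_eq h hc1lo hc2lo hag1, inf_usum_eq h hc1hi hc2hi hag2]
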